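/- Let G be a finite group and let N be a normal subgroup of G that is contained in the derived subgroup G'. If T(G) > (1/2)·|G|, then T(G/N) > (1/2)·|G/N|. -/

import Mathlib

open CategoryTheory

/-- `χ : G → ℂ` is an irreducible complex character of the group `G`, i.e. the character of
an irreducible (simple) finite-dimensional complex representation of `G`. -/
def IsIrrChar (G : Type) [Group G] (χ : G → ℂ) : Prop :=
  ∃ V : FDRep ℂ G, Simple V ∧ χ = FDRep.character V

/-- `charDegSum G` is `T(G)`, the sum of the degrees `χ(1)` of the irreducible complex
characters of `G`. -/
noncomputable def charDegSum (G : Type) [Group G] : ℝ :=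
  ∑ᶠ χ ∈ {χ : G → ℂ | IsIrrChar G χ}, (χ 1).re

open CategoryTheory.Limits Module
open scoped Classical

namespace CharProof
variable {G : Type} [Group G]
variable {G : Type} [Group G]

def Inv {V : Type} [AddCommGroup V] [Module ℂ V] (ρ : Representation ℂ G V)
    (U : Submodule ℂ V) : Prop := ∀ (g : G) x, x ∈ U → ρ g x ∈ U

def subRep {V : Type} [AddCommGroup V] [Module ℂ V] (ρ : Representation ℂ G V)
    (U : Submodule ℂ V) (h : Inv ρ U) : Representation ℂ G U where
  toFun g := (ρ g).restrict (fun x hx => h g x hx)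
  map_one' := by ext x; simp
  map_mul' g₁ g₂ := by ext x; simp [LinearMap.restrict_apply]

@[simp] lemma subRep_apply {V : Type} [AddCommGroup V] [Module ℂ V] (ρ : Representation ℂ G V)
    (U : Submodule ℂ V) (h : Inv ρ U) (g : G) (x : U) :
    (subRep ρ U h g x : V) = ρ g (x : V) := rfl

/-- The inclusion of an invariant subspace as a morphism of `FDRep`s. -/
def inclHom (V : FDRep ℂ G) (U : Submodule ℂ V) (h : Inv V.ρ U) :
    FDRep.of (subRep V.ρ U h) ⟶ V :=
  ⟨FGModuleCat.ofHom U.subtype, fun g => by ext x; rfl⟩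

lemma hom_injective {V W : FDRep ℂ G} (f : V ⟶ W) [Mono f] : Function.Injective f.hom := by
  set K := LinearMap.ker (f.hom.hom.hom : V →ₗ[ℂ] W) with hKdef
  suffices hKbot : K = ⊥ by
    intro x y hxy
    have : x - y ∈ K := by
      show f.hom (x - y) = 0
      rw [map_sub, hxy, sub_self]
    rw [hKbot, Submodule.mem_bot] at this
    exact sub_eq_zero.mp this
  have hK : Inv V.ρ K := by
    intro g x hx
    have hx' : f.hom x = 0 := hx
    have : f.hom (V.ρ g x) = W.ρ g (f.hom x) :=
      congrArg (fun p => p.hom.hom x) (f.comm g)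
    show f.hom (V.ρ g x) = 0
    rw [this, hx', map_zero]
  have hj : inclHom V K hK ≫ f = (0 : _ ⟶ W) := by
    ext x
    exact x.2
  have hj0 : inclHom V K hK = 0 := by
    have := hj.trans (zero_comp (f := f)).symm
    exact Mono.right_cancellation _ _ this
  rw [Submodule.eq_bot_iff]
  intro x hx
  have := congrFun (congrArg (fun (p : _ ⟶ V) => (p.hom : _ → V)) hj0) ⟨x, hx⟩
  exact this

theorem simple_iff (V : FDRep ℂ G) :
    Simple V ↔ Nontrivial V ∧ ∀ U : Submodule ℂ V, Inv V.ρ U → U = ⊥ ∨ U = ⊤ := by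
  constructor
  · intro hS
    constructor
    · by_contra hnt
      rw [not_nontrivial_iff_subsingleton] at hnt
      have hsub : Subsingleton (CoeSort.coe V) := hnt
      have h1 : (𝟙 V : V ⟶ V) = 0 := by ext x; exact @Subsingleton.elim _ hsub _ _
      have := (Simple.mono_isIso_iff_nonzero (𝟙 V)).mp inferInstance
      exact this h1
    · intro U hU
      by_cases hbot : U = ⊥
      · exact Or.inl hbot
      right
      set i := inclHom V U hU with hi
      have hinj : Function.Injective i.hom := fun x y hxy => Subtype.ext hxy
      have hmono : Mono i := by
        apply (Action.forget _ _).mono_of_mono_map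
        show Mono (i.hom)
        apply (forget₂ (FGModuleCat ℂ) (ModuleCat ℂ)).mono_of_mono_map
        exact (ModuleCat.mono_iff_injective _).mpr hinj
      have hne : i ≠ 0 := by
        obtain ⟨u, hu, hune⟩ := Submodule.exists_mem_ne_zero_of_ne_bot hbot
        intro h0
        have := congrFun (congrArg (fun (p : _ ⟶ V) => (p.hom : _ → V)) h0) ⟨u, hu⟩
        simp only at this
        exact hune this
      have hiso : IsIso i := (Simple.mono_isIso_iff_nonzero i).mpr hne
      have hbij : Function.Bijective i.hom := by
        have : IsIso i.hom := by
          change IsIso ((Action.forget _ _).map i)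
          infer_instance
        exact ConcreteCategory.bijective_of_isIso i.hom
      rw [Submodule.eq_top_iff']
      intro x
      obtain ⟨u, hu⟩ := hbij.2 x
      have : (u.1 : CoeSort.coe V) = x := hu
      exact this ▸ u.2
  · rintro ⟨hnt, hU⟩
    constructor
    intro Y f hf
    constructor
    · intro hiso h0
      obtain ⟨ginv, _, hginv⟩ := hiso.out
      have : (𝟙 V : V ⟶ V) = 0 := by
        rw [h0, comp_zero] at hginv
        exact hginv.symm
      obtain ⟨x, y, hxy⟩ := hnt
      apply hxy
      have hx := congrFun (congrArg (fun (p : V ⟶ V) => (p.hom : V → V)) this) x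
      have hy := congrFun (congrArg (fun (p : V ⟶ V) => (p.hom : V → V)) this) y
      simp only at hx hy
      calc x = (𝟙 V : V ⟶ V).hom x := rfl
        _ = (0 : V ⟶ V).hom x := by rw [this]
        _ = (0 : V ⟶ V).hom y := rfl
        _ = (𝟙 V : V ⟶ V).hom y := by rw [this]
        _ = y := rfl
    · intro hne
      have hinj : Function.Injective f.hom := hom_injective f
      have hcomm : ∀ (g : G) x, f.hom (Y.ρ g x) = V.ρ g (f.hom x) := fun g x =>
        congrArg (fun p => p.hom.hom x) (f.comm g)
      have hR : Inv V.ρ (LinearMap.range (f.hom.hom.hom : Y →ₗ[ℂ] V)) := by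
        rintro g x ⟨y, rfl⟩
        exact ⟨Y.ρ g y, hcomm g y⟩
      rcases hU _ hR with hbot | htop
      · exfalso
        apply hne
        ext y
        have : f.hom y ∈ LinearMap.range (f.hom.hom.hom : Y →ₗ[ℂ] V) := ⟨y, rfl⟩
        rw [hbot] at this
        exact (Submodule.mem_bot ℂ).mp this
      · have hsurj : Function.Surjective f.hom := by
          change Function.Surjective f.hom.hom.hom
          rw [← LinearMap.range_eq_top (f := (f.hom.hom.hom : Y →ₗ[ℂ] V))]
          exact htop
        let e : Y ≃ₗ[ℂ] V := LinearEquiv.ofBijective f.hom.hom.hom ⟨hinj, hsurj⟩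
        have key : ∀ w, f.hom (e.symm w) = w := fun w => e.apply_symm_apply w
        have hcomm' : ∀ (g : G) x, e.symm.toLinearMap (V.ρ g x) = Y.ρ g (e.symm.toLinearMap x) := by
          intro g x
          apply hinj
          show f.hom (e.symm (V.ρ g x)) = f.hom (Y.ρ g (e.symm x))
          rw [key, hcomm, key]
        let ginv : V ⟶ Y := ⟨FGModuleCat.ofHom e.symm.toLinearMap, fun g => by ext x; exact hcomm' g x⟩
        refine ⟨ginv, ?_, ?_⟩
        · ext y
          show e.symm (f.hom y) = y
          exact e.symm_apply_apply y
        · ext x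
          show f.hom (e.symm x) = x
          exact e.apply_symm_apply x
/-- character of `FDRep.of`. -/
lemma character_of {V : Type} [AddCommGroup V] [Module ℂ V] [FiniteDimensional ℂ V]
    (ρ : Representation ℂ G V) (g : G) :
    (FDRep.of ρ).character g = LinearMap.trace ℂ V (ρ g) := rfl

/-- Additivity of the character over an invariant direct-sum decomposition. -/
lemma character_add_of_isCompl (V : FDRep ℂ G) (U W : Submodule ℂ V)
    (hU : Inv V.ρ U) (hW : Inv V.ρ W) (hc : IsCompl U W) (g : G) :
    V.character g =
      (FDRep.of (subRep V.ρ U hU)).character g + (FDRep.of (subRep V.ρ W hW)).character g := by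
  rw [character_of, character_of]
  set e := U.prodEquivOfIsCompl W hc with he
  have heq : V.ρ g = e.conj ((subRep V.ρ U hU g).prodMap (subRep V.ρ W hW g)) := by
    apply LinearMap.ext; intro x
    obtain ⟨⟨u, w⟩, rfl⟩ := e.surjective x
    rw [LinearEquiv.conj_apply]
    simp only [LinearMap.comp_apply, LinearEquiv.coe_coe, LinearEquiv.symm_apply_apply]
    have happ : ∀ (u : U) (w : W), e (u, w) = (u : V) + (w : V) := by
      intro u w
      rw [he]
      rw [show ((U.prodEquivOfIsCompl W hc) (u, w) : V)
        = (U.subtype.coprod W.subtype) (u, w) by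
          rw [← Submodule.coe_prodEquivOfIsCompl]; rfl]
      simp [LinearMap.coprod_apply]
    rw [happ, happ, map_add]
    rfl
  show LinearMap.trace ℂ _ (V.ρ g) = _
  rw [heq, LinearMap.trace_conj', LinearMap.trace_prodMap']

/-- Maschke: an invariant subspace has an invariant complement. -/
lemma exists_inv_compl [Fintype G] (V : FDRep ℂ G) (U : Submodule ℂ V) (hU : Inv V.ρ U) :
    ∃ W : Submodule ℂ V, Inv V.ρ W ∧ IsCompl U W := by
  obtain ⟨C, hC⟩ := Submodule.exists_isCompl U
  set π₀ : V →ₗ[ℂ] V := U.subtype.comp (U.projectionOnto C hC) with hπ₀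
  have hπ₀U : ∀ u ∈ U, π₀ u = u := by
    intro u hu
    simp [hπ₀, Submodule.projectionOnto_apply_left hC ⟨u, hu⟩]
  have hπ₀mem : ∀ x, π₀ x ∈ U := fun x => (U.projectionOnto C hC x).2
  set π : V →ₗ[ℂ] V :=
    (Fintype.card G : ℂ)⁻¹ • ∑ g : G, (V.ρ g⁻¹).comp (π₀.comp (V.ρ g)) with hπ
  have hcard : (Fintype.card G : ℂ) ≠ 0 := by
    exact_mod_cast Nat.cast_ne_zero.mpr Fintype.card_ne_zero
  have hπmem : ∀ x, π x ∈ U := by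
    intro x
    rw [hπ]
    simp only [LinearMap.smul_apply, LinearMap.sum_apply, LinearMap.comp_apply]
    refine Submodule.smul_mem _ _ (Submodule.sum_mem _ fun g _ => ?_)
    exact hU g⁻¹ _ (hπ₀mem _)
  have hπU : ∀ u ∈ U, π u = u := by
    intro u hu
    rw [hπ]
    simp only [LinearMap.smul_apply, LinearMap.sum_apply, LinearMap.comp_apply]
    have : ∀ g : G, V.ρ g⁻¹ (π₀ (V.ρ g u)) = u := by
      intro g
      rw [hπ₀U _ (hU g u hu)]
      show (V.ρ g⁻¹ * V.ρ g) u = u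
      rw [← map_mul, inv_mul_cancel, map_one]
      rfl
    rw [Finset.sum_congr rfl (fun g _ => this g), Finset.sum_const, Finset.card_univ]
    rw [← Nat.cast_smul_eq_nsmul ℂ, smul_smul, inv_mul_cancel₀ hcard, one_smul]
  have hπcomm : ∀ h : G, π.comp (V.ρ h) = (V.ρ h).comp π := by
    intro h
    rw [hπ]
    apply LinearMap.ext; intro x
    simp only [LinearMap.comp_apply, LinearMap.smul_apply, LinearMap.sum_apply, map_smul,
      map_sum]
    congr 1
    have term : ∀ (g : G) (x' : V), V.ρ h ((V.ρ (g*h)⁻¹) (π₀ (V.ρ (g*h) x'))) =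
        V.ρ g⁻¹ (π₀ (V.ρ g (V.ρ h x'))) := by
      intro g x'
      have e1 : V.ρ (g*h) x' = V.ρ g (V.ρ h x') := by
        rw [map_mul]; rfl
      have e2 : ∀ y, V.ρ h (V.ρ (g*h)⁻¹ y) = V.ρ g⁻¹ y := by
        intro y
        show (V.ρ h * V.ρ (g*h)⁻¹) y = V.ρ g⁻¹ y
        rw [← map_mul]
        congr 1
        group
      rw [e1, e2]
    calc ∑ g : G, V.ρ g⁻¹ (π₀ (V.ρ g (V.ρ h x)))
        = ∑ g : G, V.ρ h ((V.ρ (g*h)⁻¹) (π₀ (V.ρ (g*h) x))) := by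
          exact Finset.sum_congr rfl (fun g _ => (term g x).symm)
      _ = ∑ g : G, V.ρ h (V.ρ g⁻¹ (π₀ (V.ρ g x))) :=
          Equiv.sum_comp (Equiv.mulRight h) (fun g => V.ρ h (V.ρ g⁻¹ (π₀ (V.ρ g x))))
  set π' : V →ₗ[ℂ] U := π.codRestrict U hπmem with hπ'
  refine ⟨LinearMap.ker π', ?_, ?_⟩
  · intro g x hx
    have hx0 : π x = 0 := by
      have : π' x = 0 := hx
      have := congrArg (Subtype.val) this
      simpa [hπ'] using this
    show π' (V.ρ g x) = 0
    apply Subtype.ext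
    show π (V.ρ g x) = 0
    have := LinearMap.congr_fun (hπcomm g) x
    simp only [LinearMap.comp_apply] at this
    rw [this, hx0, map_zero]
  · exact LinearMap.isCompl_of_proj (fun x => Subtype.ext (hπU x x.2))
variable [Fintype G]

noncomputable def pair (f₁ f₂ : G → ℂ) : ℂ :=
  (Fintype.card G : ℂ)⁻¹ * ∑ g : G, f₁ g * f₂ g⁻¹

lemma pair_char (V W : FDRep ℂ G) [Simple V] [Simple W] :
    pair V.character W.character = if Nonempty (V ≅ W) then 1 else 0 := by
  have key := FDRep.char_orthonormal (k := ℂ) V W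
  rw [pair, ← Nat.card_eq_fintype_card]
  exact key.trans (by norm_num)

lemma pair_orth {χ₁ χ₂ : G → ℂ} (h₁ : IsIrrChar G χ₁) (h₂ : IsIrrChar G χ₂) :
    pair χ₁ χ₂ = if χ₁ = χ₂ then 1 else 0 := by
  obtain ⟨V, hV, rfl⟩ := h₁
  obtain ⟨W, hW, rfl⟩ := h₂
  rw [pair_char V W]
  by_cases hiso : Nonempty (V ≅ W)
  · rw [if_pos hiso, if_pos (FDRep.char_iso hiso.some)]
  · rw [if_neg hiso, if_neg]
    intro hc
    have k1 := pair_char V V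
    rw [if_pos ⟨Iso.refl V⟩] at k1
    have k2 := pair_char V W
    rw [if_neg hiso] at k2
    rw [← hc] at k2
    rw [k1] at k2
    exact one_ne_zero k2

section Degree
variable {G : Type} [Group G]

lemma isIrrChar_degree {χ : G → ℂ} (h : IsIrrChar G χ) :
    ∃ n : ℕ, 1 ≤ n ∧ χ 1 = (n : ℂ) := by
  obtain ⟨V, hV, rfl⟩ := h
  refine ⟨finrank ℂ V, ?_, FDRep.char_one V⟩
  have hnt : Nontrivial V := ((simple_iff V).mp hV).1
  exact Module.finrank_pos

end Degree

section Finiteness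
variable {G : Type} [Group G] [Fintype G]

/-- The pairing against a fixed function, as a linear functional. -/
noncomputable def pairL (χ₀ : G → ℂ) : (G → ℂ) →ₗ[ℂ] ℂ where
  toFun f := pair f χ₀
  map_add' f₁ f₂ := by
    simp [pair, add_mul, Finset.sum_add_distrib, mul_add]
  map_smul' a f := by
    simp [pair, Finset.mul_sum, smul_eq_mul, mul_assoc, mul_left_comm]

lemma irr_finite : {χ : G → ℂ | IsIrrChar G χ}.Finite := by
  apply LinearIndependent.setFinite (R := ℂ)
  rw [linearIndependent_iff]
  intro l hl
  ext χ₀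
  simp only [Finsupp.coe_zero, Pi.zero_apply]
  have h0 := congrArg (pairL (χ₀ : G → ℂ)) hl
  rw [map_zero, Finsupp.linearCombination_apply, map_finsuppSum] at h0
  have hterm : ∀ (χ : {χ : G → ℂ | IsIrrChar G χ}) (a : ℂ),
      pairL (χ₀ : G → ℂ) (a • (χ : G → ℂ)) = a * (if χ = χ₀ then 1 else 0) := by
    intro χ a
    rw [map_smul, smul_eq_mul]
    congr 1
    show pair (χ : G → ℂ) (χ₀ : G → ℂ) = _
    rw [pair_orth χ.2 χ₀.2]
    congr 1
    simp [Subtype.ext_iff]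
  have h0' : (l.sum fun χ a => a * if χ = χ₀ then 1 else 0) = 0 :=
    (Finsupp.sum_congr (fun χ _ => hterm χ (l χ))).symm.trans h0
  replace h0 := h0' 
  rw [Finsupp.sum_eq_single χ₀ (fun b _ hb => by rw [if_neg hb, mul_zero])
    (fun _ => by rw [zero_mul])] at h0
  rw [if_pos rfl, mul_one] at h0
  exact h0

/-- The (finite) set of irreducible characters, as a `Finset`. -/
noncomputable def irrF (G : Type) [Group G] [Fintype G] : Finset (G → ℂ) :=
  (irr_finite (G := G)).toFinset

lemma mem_irrF {χ : G → ℂ} : χ ∈ irrF G ↔ IsIrrChar G χ := Set.Finite.mem_toFinset _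

end Finiteness

section Regular
variable {G : Type} [Group G] [Fintype G]

/-- The left regular representation on `G → ℂ`. -/
noncomputable def regRep (G : Type) [Group G] : Representation ℂ G (G → ℂ) where
  toFun g := LinearMap.funLeft ℂ ℂ (fun x => g⁻¹ * x)
  map_one' := by
    apply LinearMap.ext; intro f; funext x
    simp [LinearMap.funLeft_apply]
  map_mul' g h := by
    apply LinearMap.ext; intro f; funext x
    simp [LinearMap.funLeft_apply, mul_assoc, mul_inv_rev]

lemma char_regRep (g : G) :
    (FDRep.of (regRep G)).character g = if g = 1 then (Fintype.card G : ℂ) else 0 := by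
  rw [character_of]
  rw [LinearMap.trace_eq_matrix_trace ℂ (Pi.basisFun ℂ G)]
  rw [Matrix.trace]
  have hdiag : ∀ j : G,
      (LinearMap.toMatrix (Pi.basisFun ℂ G) (Pi.basisFun ℂ G) (regRep G g)).diag j
        = if g = 1 then 1 else 0 := by
    intro j
    rw [Matrix.diag_apply, LinearMap.toMatrix_apply, Pi.basisFun_repr, Pi.basisFun_apply]
    show (Pi.single j 1 : G → ℂ) (g⁻¹ * j) = _
    rw [Pi.single_apply]
    by_cases hg : g = 1
    · simp [hg]
    · rw [if_neg hg, if_neg]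
      intro hc
      apply hg
      have : g⁻¹ * j = 1 * j := by rw [hc, one_mul]
      have := mul_right_cancel this
      rw [← inv_inv g, this, inv_one]
  rw [Finset.sum_congr rfl (fun j _ => hdiag j)]
  by_cases hg : g = 1 <;> simp [hg, Finset.card_univ]

end Regular

section Decomp
variable {G : Type} [Group G] [Fintype G]

theorem char_decomp (V : FDRep ℂ G) :
    ∃ c : (G → ℂ) → ℕ, ∀ g : G, V.character g = ∑ χ ∈ irrF G, (c χ : ℂ) * χ g := by
  suffices H : ∀ (n : ℕ) (V : FDRep ℂ G), finrank ℂ V = n →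
      ∃ c : (G → ℂ) → ℕ, ∀ g : G, V.character g = ∑ χ ∈ irrF G, (c χ : ℂ) * χ g by
    exact H (finrank ℂ V) V rfl
  intro n
  induction n using Nat.strong_induction_on with
  | _ n ih =>
  intro V hn
  rcases subsingleton_or_nontrivial V with hss | hnt
  · refine ⟨0, fun g => ?_⟩
    have h0 : V.ρ g = 0 := Subsingleton.elim _ _
    show LinearMap.trace ℂ _ (V.ρ g) = _
    rw [h0, map_zero]
    simp
  · by_cases hirr : ∀ U : Submodule ℂ V, Inv V.ρ U → U = ⊥ ∨ U = ⊤
    · have hS : Simple V := (simple_iff V).mpr ⟨hnt, hirr⟩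
      refine ⟨fun χ => if χ = V.character then 1 else 0, fun g => ?_⟩
      have hmem : V.character ∈ irrF G := mem_irrF.mpr ⟨V, hS, rfl⟩
      have : ∀ χ ∈ irrF G,
          ((if χ = V.character then (1:ℕ) else 0 : ℕ) : ℂ) * χ g
            = if χ = V.character then χ g else 0 := by
        intro χ _
        by_cases hχ : χ = V.character <;> simp [hχ]
      rw [Finset.sum_congr rfl this, Finset.sum_ite_eq' (irrF G) V.character (fun χ => χ g),
        if_pos hmem]
    · push_neg at hirr
      obtain ⟨U, hUinv, hUbot, hUtop⟩ := hirr
      obtain ⟨W, hWinv, hWc⟩ := exists_inv_compl V U hUinv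
      have hrank : finrank ℂ U + finrank ℂ W = n := by
        rw [← hn]
        exact Submodule.finrank_add_eq_of_isCompl hWc
      have hUlt : finrank ℂ U < n := by
        rw [← hn]
        exact Submodule.finrank_lt hUtop
      have hUpos : 0 < finrank ℂ U := by
        obtain ⟨u, hu, hune⟩ := Submodule.exists_mem_ne_zero_of_ne_bot hUbot
        have : Nontrivial U := ⟨⟨⟨u, hu⟩, 0, by simpa [Subtype.ext_iff] using hune⟩⟩
        exact Module.finrank_pos
      have hWlt : finrank ℂ W < n := by omega
      obtain ⟨c₁, hc₁⟩ := ih _ hUlt (FDRep.of (subRep V.ρ U hUinv)) rfl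
      obtain ⟨c₂, hc₂⟩ := ih _ hWlt (FDRep.of (subRep V.ρ W hWinv)) rfl
      refine ⟨c₁ + c₂, fun g => ?_⟩
      rw [character_add_of_isCompl V U W hUinv hWinv hWc g, hc₁ g, hc₂ g,
        ← Finset.sum_add_distrib]
      refine Finset.sum_congr rfl fun χ _ => ?_
      simp only [Pi.add_apply, Nat.cast_add]
      ring

theorem sum_sq : ∑ χ ∈ irrF G, χ 1 * χ 1 = (Fintype.card G : ℂ) := by
  have hcard : (Fintype.card G : ℂ) ≠ 0 := Nat.cast_ne_zero.mpr Fintype.card_ne_zero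
  obtain ⟨c, hc⟩ := char_decomp (FDRep.of (regRep G))
  have hcoef : ∀ χ₀ ∈ irrF G, (c χ₀ : ℂ) = χ₀ 1 := by
    intro χ₀ h₀
    have h₀' : IsIrrChar G χ₀ := mem_irrF.mp h₀
    have lhs : pair (FDRep.of (regRep G)).character χ₀ = χ₀ 1 := by
      rw [pair]
      have hsum : ∑ g : G, (FDRep.of (regRep G)).character g * χ₀ g⁻¹
          = (Fintype.card G : ℂ) * χ₀ 1 := by
        rw [Finset.sum_eq_single 1]
        · rw [char_regRep, if_pos rfl, inv_one]
        · intro b _ hb; rw [char_regRep, if_neg hb, zero_mul]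
        · intro h; exact absurd (Finset.mem_univ 1) h
      rw [hsum, ← mul_assoc, inv_mul_cancel₀ hcard, one_mul]
    have rhs : pair (FDRep.of (regRep G)).character χ₀ = (c χ₀ : ℂ) := by
      rw [pair]
      have hterm : ∀ g : G, (FDRep.of (regRep G)).character g * χ₀ g⁻¹
          = ∑ χ ∈ irrF G, (c χ : ℂ) * (χ g * χ₀ g⁻¹) := by
        intro g
        rw [hc g, Finset.sum_mul]
        exact Finset.sum_congr rfl fun χ _ => mul_assoc _ _ _
      rw [Finset.sum_congr rfl (fun g _ => hterm g), Finset.sum_comm, Finset.mul_sum]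
      have hswap : ∀ χ ∈ irrF G,
          (Fintype.card G : ℂ)⁻¹ * ∑ g : G, (c χ : ℂ) * (χ g * χ₀ g⁻¹)
            = (c χ : ℂ) * pair χ χ₀ := by
        intro χ _
        rw [pair, ← Finset.mul_sum]
        ring
      rw [Finset.sum_congr rfl hswap]
      rw [Finset.sum_congr rfl (fun χ hχ => by rw [pair_orth (mem_irrF.mp hχ) h₀'])]
      have : ∀ χ ∈ irrF G, (c χ : ℂ) * (if χ = χ₀ then 1 else 0)
          = if χ = χ₀ then (c χ : ℂ) else 0 := by
        intro χ _
        by_cases hχ : χ = χ₀ <;> simp [hχ]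
      rw [Finset.sum_congr rfl this, Finset.sum_ite_eq' (irrF G) χ₀ (fun χ => (c χ : ℂ)),
        if_pos h₀]
    exact rhs.symm.trans lhs
  have h1 := hc 1
  rw [char_regRep, if_pos rfl] at h1
  rw [h1]
  exact Finset.sum_congr rfl fun χ hχ => by rw [hcoef χ hχ]

end Decomp

section Inflation

lemma isIrrChar_comp_surjective {G H : Type} [Group G] [Group H] (f : G →* H)
    (hf : Function.Surjective ⇑f) {χ : H → ℂ} (h : IsIrrChar H χ) :
    IsIrrChar G (χ ∘ ⇑f) := by
  obtain ⟨W, hW, rfl⟩ := h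
  refine ⟨FDRep.of (W.ρ.comp f), ?_, ?_⟩
  · rw [simple_iff] at hW ⊢
    obtain ⟨hnt, hU⟩ := hW
    refine ⟨hnt, fun U hUinv => hU U ?_⟩
    intro h x hx
    obtain ⟨g, rfl⟩ := hf h
    exact hUinv g x hx
  · funext g
    rfl

lemma end_dim1 {X : Type} [AddCommGroup X] [Module ℂ X] [FiniteDimensional ℂ X]
    (hr : finrank ℂ X = 1) (φ : X →ₗ[ℂ] X) :
    φ = (LinearMap.trace ℂ X φ) • LinearMap.id := by
  let b : Basis (Fin 1) ℂ X := Module.finBasisOfFinrankEq ℂ X hr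
  have htr : LinearMap.trace ℂ X φ = b.repr (φ (b 0)) 0 := by
    rw [LinearMap.trace_eq_matrix_trace ℂ b, Matrix.trace]
    simp [Matrix.diag, LinearMap.toMatrix_apply, Fin.sum_univ_one]
  apply b.ext
  intro i
  have hi : i = 0 := Subsingleton.elim _ _
  subst hi
  rw [htr, LinearMap.smul_apply, LinearMap.id_apply]
  simpa [Fin.sum_univ_one] using (b.sum_repr (φ (b 0))).symm

lemma degree_one_factors {G : Type} [Group G] (N : Subgroup G) [N.Normal]
    (hN : N ≤ commutator G) {χ : G → ℂ} (h : IsIrrChar G χ) (hdeg : χ 1 = 1) :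
    ∃ ψ : (G ⧸ N) → ℂ, IsIrrChar (G ⧸ N) ψ ∧ χ = ψ ∘ (QuotientGroup.mk : G → G ⧸ N) := by
  obtain ⟨V, hV, rfl⟩ := h
  have hnt : Nontrivial V := ((simple_iff V).mp hV).1
  have hr : finrank ℂ V = 1 := by
    have hco := FDRep.char_one V
    rw [hco] at hdeg
    exact_mod_cast hdeg
  have hscal : ∀ g : G, V.ρ g = (V.character g) • LinearMap.id :=
    fun g => end_dim1 hr (V.ρ g)
  have hmul : ∀ g h : G, V.character (g * h) = V.character g * V.character h := by
    intro g h
    obtain ⟨x, hx⟩ := exists_ne (0 : V)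
    have e1 : V.ρ (g * h) x = (V.character (g * h)) • x := by
      rw [hscal]; rfl
    have e2 : V.ρ (g * h) x = (V.character g * V.character h) • x := by
      rw [map_mul]
      show V.ρ g (V.ρ h x) = _
      rw [hscal h]
      show V.ρ g ((V.character h) • x) = _
      rw [map_smul, hscal g]
      show V.character h • (V.character g • x) = _
      rw [smul_smul, mul_comm]
    exact smul_left_injective ℂ hx (e1.symm.trans e2)
  have h1 : V.character 1 = 1 := hdeg
  let χm : G →* ℂ := { toFun := V.character, map_one' := h1, map_mul' := hmul }
  let χu : G →* ℂˣ := χm.toHomUnits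
  have hker : ∀ n ∈ N, V.character n = 1 := by
    have hcomm : commutator G ≤ χu.ker := by
      rw [commutator_def, Subgroup.commutator_le]
      intro g₁ _ g₂ _
      rw [MonoidHom.mem_ker, map_commutatorElement]
      exact commutatorElement_eq_one_iff_mul_comm.mpr (mul_comm _ _)
    intro n hn
    have hmem : χu n = 1 := MonoidHom.mem_ker.mp (hcomm (hN hn))
    have := congrArg (Units.val) hmem
    rw [MonoidHom.coe_toHomUnits] at this
    exact this
  have hle : N ≤ (V.ρ : G →* (V →ₗ[ℂ] V)).ker := by
    intro n hn
    rw [MonoidHom.mem_ker, hscal n, hker n hn, one_smul]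
    rfl
  let ρ' : Representation ℂ (G ⧸ N) V := QuotientGroup.lift N V.ρ hle
  refine ⟨(FDRep.of ρ').character, ⟨FDRep.of ρ', ?_, rfl⟩, ?_⟩
  · rw [simple_iff]
    have hcrit := (simple_iff V).mp hV
    refine ⟨hcrit.1, fun U hUinv => hcrit.2 U ?_⟩
    intro g x hx
    exact hUinv (QuotientGroup.mk g) x hx
  · funext g
    rfl

end Inflation

section Sums
variable (G : Type) [Group G] [Fintype G]

lemma charDegSum_eq : charDegSum G = ∑ χ ∈ irrF G, (χ 1).re := by
  rw [charDegSum, ← Set.Finite.coe_toFinset (irr_finite (G := G)), finsum_mem_coe_finset]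
  rfl

lemma sum_sq_re : ∑ χ ∈ irrF G, (χ 1).re * (χ 1).re = (Fintype.card G : ℝ) := by
  have hre := congrArg Complex.re (sum_sq (G := G))
  rw [Complex.re_sum, Complex.natCast_re] at hre
  rw [← hre]
  refine Finset.sum_congr rfl fun χ hχ => ?_
  obtain ⟨n, _, hn⟩ := isIrrChar_degree (mem_irrF.mp hχ)
  rw [hn]
  simp [Complex.natCast_re, ← Nat.cast_mul]

lemma two_le_deg {χ : G → ℂ} (h : IsIrrChar G χ) (hne : χ 1 ≠ 1) : 2 ≤ (χ 1).re := by
  obtain ⟨n, hn1, hn⟩ := isIrrChar_degree h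
  have hn2 : 2 ≤ n := by
    by_contra hlt
    push_neg at hlt
    have hone : n = 1 := by omega
    subst hone
    exact hne (by rw [hn]; norm_num)
  rw [hn]
  simp only [Complex.natCast_re]
  exact_mod_cast hn2

end Sums
end CharProof


open CharProof

/-- If `N` is a normal subgroup of a finite group `G` contained in the derived subgroup
`G'` and `T(G) > (1/2)·|G|`, then `T(G/N) > (1/2)·|G/N|`. -/
theorem degree_sum_quotient (G : Type) [Group G] [Fintype G] (N : Subgroup G) [N.Normal]
    (hN : N ≤ commutator G) (h : charDegSum G > (1 / 2 : ℝ) * Nat.card G) :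
    charDegSum (G ⧸ N) > (1 / 2 : ℝ) * Nat.card (G ⧸ N) := by
  classical
  haveI : Fintype (G ⧸ N) := Fintype.ofFinite _
  have hmksurj : Function.Surjective (QuotientGroup.mk : G → G ⧸ N) :=
    QuotientGroup.mk_surjective
  set TG := irrF G with hTG
  set TQ := irrF (G ⧸ N) with hTQ
  set I : Finset (G → ℂ) :=
    TQ.image (fun χ => χ ∘ (QuotientGroup.mk : G → G ⧸ N)) with hI
  have hIsub : I ⊆ TG := by
    intro χ hχ
    rw [hI, Finset.mem_image] at hχ
    obtain ⟨ψ, hψ, rfl⟩ := hχ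
    exact mem_irrF.mpr (isIrrChar_comp_surjective (QuotientGroup.mk' N)
      (QuotientGroup.mk'_surjective N) (mem_irrF.mp hψ))
  have hQsum : ∀ (F : ℂ → ℝ), ∑ χ ∈ I, F (χ 1) = ∑ ψ ∈ TQ, F (ψ 1) := by
    intro F
    rw [hI, Finset.sum_image]
    · refine Finset.sum_congr rfl fun ψ _ => ?_
      have : (ψ ∘ (QuotientGroup.mk : G → G ⧸ N)) 1 = ψ 1 := by
        show ψ (QuotientGroup.mk 1) = ψ 1
        rw [QuotientGroup.mk_one]
      rw [this]
    · intro a _ b _ hab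
      funext q
      obtain ⟨g, rfl⟩ := hmksurj q
      exact congrFun hab g
  have hTGsq : ∑ χ ∈ TG, (χ 1).re * (χ 1).re = (Fintype.card G : ℝ) := sum_sq_re G
  have hIsq : ∑ χ ∈ I, (χ 1).re * (χ 1).re = (Fintype.card (G ⧸ N) : ℝ) := by
    rw [hQsum (fun z => z.re * z.re)]
    exact sum_sq_re (G ⧸ N)
  have hdiff : ∑ χ ∈ TG \ I, (χ 1).re * (χ 1).re
      = (Fintype.card G : ℝ) - (Fintype.card (G ⧸ N) : ℝ) := by
    rw [← hTGsq, ← hIsq]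
    exact Finset.sum_sdiff_eq_sub hIsub
  have hCD_G : charDegSum G = ∑ χ ∈ TG, (χ 1).re := charDegSum_eq G
  have hCD_Q : charDegSum (G ⧸ N) = ∑ χ ∈ I, (χ 1).re := by
    rw [charDegSum_eq (G ⧸ N), ← hQsum (fun z => z.re)]
  have hbound : ∑ χ ∈ TG \ I, (χ 1).re ≤ (1/2) * ((Fintype.card G : ℝ) - (Fintype.card (G ⧸ N) : ℝ)) := by
    rw [← hdiff, Finset.mul_sum]
    refine Finset.sum_le_sum fun χ hχ => ?_
    rw [Finset.mem_sdiff] at hχ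
    obtain ⟨hχTG, hχI⟩ := hχ
    have hirr := mem_irrF.mp hχTG
    have hne1 : χ 1 ≠ 1 := by
      intro h1
      obtain ⟨ψ, hψirr, rfl⟩ := degree_one_factors N hN hirr h1
      exact hχI (Finset.mem_image.mpr ⟨ψ, mem_irrF.mpr hψirr, rfl⟩)
    have h2 := two_le_deg G hirr hne1
    nlinarith
  have hsd : ∑ χ ∈ I, (χ 1).re = ∑ χ ∈ TG, (χ 1).re - ∑ χ ∈ TG \ I, (χ 1).re := by
    rw [Finset.sum_sdiff_eq_sub hIsub]
    ring
  have hcardG : (Nat.card G : ℝ) = (Fintype.card G : ℝ) := by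
    rw [Nat.card_eq_fintype_card]
  have hcardQ : (Nat.card (G ⧸ N) : ℝ) = (Fintype.card (G ⧸ N) : ℝ) := by
    rw [Nat.card_eq_fintype_card]
  rw [hCD_G, hcardG] at h
  rw [hCD_Q, hsd, hcardQ]
  linarith
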